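/- Let μ, η > 0 and c ≥ 0, and define I(c) = (1/Γ(μ)) ∫₀^∞ (1 + c t^{1/η}) exp(-c t^{1/η}) t^{μ-1} e^{-t} dt. Then I(c) = 1 - c² Γ(μ + 2/η)/(2Γ(μ)) + O(c³) as c → 0⁺; in particular 1 - I(c) decays quadratically in c. -/

import Mathlib

open MeasureTheory Real Filter Asymptotics

/-- Pointwise second-order bound for `(1+x)e^{-x}`. -/
lemma cea_zf_ptwise (x : ℝ) (hx : 0 ≤ x) :
    |(1 + x) * Real.exp (-x) - (1 - x ^ 2 / 2)| ≤ x ^ 3 := by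
  set g : ℝ → ℝ := fun t => (1 + t) * Real.exp (-t) - (1 - t ^ 2 / 2) with hg
  have hderiv : ∀ t : ℝ, HasDerivAt g (t * (1 - Real.exp (-t))) t := by
    intro t
    have h1 : HasDerivAt (fun t : ℝ => Real.exp (-t)) (-Real.exp (-t)) t := by
      exact ((Real.hasDerivAt_exp (-t)).comp t (hasDerivAt_neg t)).congr_deriv (by ring)
    have h2 : HasDerivAt (fun t : ℝ => (1 + t) * Real.exp (-t))
        (1 * Real.exp (-t) + (1 + t) * (-Real.exp (-t))) t :=
      (((hasDerivAt_id t).const_add 1)).mul h1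
    have h3 : HasDerivAt (fun t : ℝ => 1 - t ^ 2 / 2) (0 - t * 2 / 2) t := by
      have : HasDerivAt (fun t : ℝ => t ^ 2) (2 * t ^ 1) t := hasDerivAt_pow 2 t
      exact ((hasDerivAt_const t (1:ℝ)).sub (this.div_const 2)).congr_deriv (by ring)
    have := h2.sub h3
    exact this.congr_deriv (by ring)
  have key : ∀ y ∈ Set.Icc (0:ℝ) x, ‖g y - g 0‖ ≤ x ^ 2 * (y - 0) := by
    apply norm_image_sub_le_of_norm_deriv_le_segment'
      (f' := fun t => t * (1 - Real.exp (-t)))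
      (fun y _ => (hderiv y).hasDerivWithinAt)
    intro y hy
    have hy0 : 0 ≤ y := hy.1
    have h1 : 1 - Real.exp (-y) ≤ y := by
      have := Real.add_one_le_exp (-y); linarith
    have h2 : 0 ≤ 1 - Real.exp (-y) := by
      have : Real.exp (-y) ≤ Real.exp 0 := Real.exp_le_exp.2 (by linarith)
      simpa using this
    have : y * (1 - Real.exp (-y)) ≤ x * x := by
      have hyx : y ≤ x := le_of_lt hy.2
      nlinarith
    rw [Real.norm_eq_abs, abs_of_nonneg (by positivity)]
    nlinarith
  have := key x ⟨hx, le_rfl⟩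
  have hg0 : g 0 = 0 := by simp [hg]
  rw [hg0, sub_zero, Real.norm_eq_abs, sub_zero] at this
  calc |g x| ≤ x ^ 2 * x := this
    _ = x ^ 3 := by ring

/-- For `μ, η > 0` and `c ≥ 0`, the integral
`I(c) = (1/Γ(μ)) ∫₀^∞ (1 + c t^{1/η}) exp(-c t^{1/η}) t^{μ-1} e^{-t} dt` satisfies
`I(c) = 1 - c² Γ(μ+2/η)/(2Γ(μ)) + O(c³)` as `c → 0⁺`; in particular `1 - I(c)` decays
quadratically in `c`. -/
theorem cea_zf_integral_asymptotics (m η : ℝ) (hm : 0 < m) (hη : 0 < η) :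
    (fun c : ℝ =>
        (1 / Real.Gamma m)
            * (∫ t in Set.Ioi (0:ℝ),
                (1 + c * t ^ (1/η)) * Real.exp (-c * t ^ (1/η)) * t ^ (m-1) * Real.exp (-t))
          - (1 - c ^ 2 * Real.Gamma (m + 2/η) / (2 * Real.Gamma m)))
      =O[nhdsWithin 0 (Set.Ioi 0)] (fun c : ℝ => c ^ 3) := by
  have hΓm : 0 < Real.Gamma m := Real.Gamma_pos_of_pos hm
  have hm2 : (0:ℝ) < m + 2/η := by positivity
  have hm3 : (0:ℝ) < m + 3/η := by positivity
  -- basic integrability facts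
  have hbase : IntegrableOn (fun t : ℝ => t ^ (m-1) * Real.exp (-t)) (Set.Ioi 0) :=
    (Real.GammaIntegral_convergent hm).congr_fun (fun t _ => mul_comm _ _) measurableSet_Ioi
  have hbase_eq : (∫ t in Set.Ioi (0:ℝ), t ^ (m-1) * Real.exp (-t)) = Real.Gamma m := by
    rw [Real.Gamma_eq_integral hm]
    exact setIntegral_congr_fun measurableSet_Ioi (fun t _ => mul_comm _ _)
  have h2 : IntegrableOn (fun t : ℝ => t ^ (2/η) * (t ^ (m-1) * Real.exp (-t))) (Set.Ioi 0) := by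
    refine (Real.GammaIntegral_convergent hm2).congr_fun (fun t ht => ?_) measurableSet_Ioi
    have ht : (0:ℝ) < t := ht
    beta_reduce
    rw [show m + 2/η - 1 = 2/η + (m - 1) by ring, Real.rpow_add ht]
    ring
  have h2_eq : (∫ t in Set.Ioi (0:ℝ), t ^ (2/η) * (t ^ (m-1) * Real.exp (-t)))
      = Real.Gamma (m + 2/η) := by
    rw [Real.Gamma_eq_integral hm2]
    refine setIntegral_congr_fun measurableSet_Ioi (fun t ht => ?_)
    have ht : (0:ℝ) < t := ht
    rw [show m + 2/η - 1 = 2/η + (m - 1) by ring, Real.rpow_add ht]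
    ring
  have h3 : IntegrableOn (fun t : ℝ => t ^ (3/η) * (t ^ (m-1) * Real.exp (-t))) (Set.Ioi 0) := by
    refine (Real.GammaIntegral_convergent hm3).congr_fun (fun t ht => ?_) measurableSet_Ioi
    have ht : (0:ℝ) < t := ht
    beta_reduce
    rw [show m + 3/η - 1 = 3/η + (m - 1) by ring, Real.rpow_add ht]
    ring
  have h3_eq : (∫ t in Set.Ioi (0:ℝ), t ^ (3/η) * (t ^ (m-1) * Real.exp (-t)))
      = Real.Gamma (m + 3/η) := by
    rw [Real.Gamma_eq_integral hm3]
    refine setIntegral_congr_fun measurableSet_Ioi (fun t ht => ?_)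
    have ht : (0:ℝ) < t := ht
    rw [show m + 3/η - 1 = 3/η + (m - 1) by ring, Real.rpow_add ht]
    ring
  rw [isBigO_iff]
  refine ⟨Real.Gamma (m + 3/η) / Real.Gamma m, ?_⟩
  filter_upwards [self_mem_nhdsWithin] with c hc
  have hc' : 0 < c := hc
  set A : ℝ → ℝ :=
    fun t => (1 + c * t ^ (1/η)) * Real.exp (-c * t ^ (1/η)) * t ^ (m-1) * Real.exp (-t) with hA_def
  have hA_meas : AEStronglyMeasurable A (volume.restrict (Set.Ioi 0)) := by
    apply Measurable.aestronglyMeasurable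
    fun_prop
  have expb : ∀ x : ℝ, 0 ≤ x → (1 + x) * Real.exp (-x) ≤ 1 := by
    intro x hx
    have h := Real.add_one_le_exp x
    have h2 := mul_le_mul_of_nonneg_right h (Real.exp_pos (-x)).le
    rwa [← Real.exp_add, add_neg_cancel, Real.exp_zero, add_comm] at h2
  have hA_bound : ∀ t ∈ Set.Ioi (0:ℝ), ‖A t‖ ≤ t ^ (m-1) * Real.exp (-t) := by
    intro t ht
    have ht : (0:ℝ) < t := ht
    have hx : 0 ≤ c * t ^ (1/η) := by positivity
    have h1 := expb _ hx
    rw [Real.norm_eq_abs, abs_of_nonneg (by positivity)]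
    have hbpos : 0 ≤ t ^ (m-1) * Real.exp (-t) := by positivity
    calc A t = ((1 + c * t ^ (1/η)) * Real.exp (-(c * t ^ (1/η)))) * (t ^ (m-1) * Real.exp (-t)) := by
          simp only [hA_def, neg_mul]; ring
      _ ≤ 1 * (t ^ (m-1) * Real.exp (-t)) := mul_le_mul_of_nonneg_right h1 hbpos
      _ = t ^ (m-1) * Real.exp (-t) := one_mul _
  have hA_int : IntegrableOn A (Set.Ioi 0) := by
    refine hbase.mono' hA_meas ?_
    filter_upwards [ae_restrict_mem measurableSet_Ioi] with t ht
    exact hA_bound t ht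
  set G : ℝ → ℝ := fun t =>
    A t - t ^ (m-1) * Real.exp (-t) + c^2/2 * (t ^ (2/η) * (t ^ (m-1) * Real.exp (-t)))
    with hG_def
  have split : (∫ t in Set.Ioi (0:ℝ), G t)
      = (∫ t in Set.Ioi (0:ℝ), A t) - Real.Gamma m + c^2/2 * Real.Gamma (m + 2/η) := by
    have hsub : IntegrableOn (fun t : ℝ => A t - t ^ (m-1) * Real.exp (-t)) (Set.Ioi 0) :=
      hA_int.sub hbase
    have hmul : IntegrableOn
        (fun t : ℝ => c^2/2 * (t ^ (2/η) * (t ^ (m-1) * Real.exp (-t)))) (Set.Ioi 0) :=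
      h2.const_mul _
    simp only [hG_def]
    rw [integral_add hsub hmul, integral_sub hA_int hbase,
      integral_const_mul, hbase_eq, h2_eq]
  have hG_bound : ∀ t ∈ Set.Ioi (0:ℝ),
      ‖G t‖ ≤ c^3 * (t ^ (3/η) * (t ^ (m-1) * Real.exp (-t))) := by
    intro t ht
    have ht : (0:ℝ) < t := ht
    set x := c * t ^ (1/η) with hx_def
    have hx : 0 ≤ x := by positivity
    have hx2 : x ^ 2 = c ^ 2 * t ^ (2/η) := by
      rw [hx_def, mul_pow, ← Real.rpow_natCast (t ^ (1/η)) 2, ← Real.rpow_mul ht.le]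
      congr 1
      push_cast
      ring
    have hx3 : x ^ 3 = c ^ 3 * t ^ (3/η) := by
      rw [hx_def, mul_pow, ← Real.rpow_natCast (t ^ (1/η)) 3, ← Real.rpow_mul ht.le]
      congr 1
      push_cast
      ring
    have hGt : G t = ((1 + x) * Real.exp (-x) - (1 - x ^ 2 / 2)) * (t ^ (m-1) * Real.exp (-t)) := by
      simp only [hG_def, hA_def, neg_mul, ← hx_def, hx2]
      ring
    have hbpos : 0 ≤ t ^ (m-1) * Real.exp (-t) := by positivity
    rw [hGt, Real.norm_eq_abs, abs_mul, abs_of_nonneg hbpos]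
    calc |(1 + x) * Real.exp (-x) - (1 - x ^ 2 / 2)| * (t ^ (m-1) * Real.exp (-t))
        ≤ x ^ 3 * (t ^ (m-1) * Real.exp (-t)) :=
          mul_le_mul_of_nonneg_right (cea_zf_ptwise x hx) hbpos
      _ = c^3 * (t ^ (3/η) * (t ^ (m-1) * Real.exp (-t))) := by rw [hx3]; ring
  have hIG : ‖∫ t in Set.Ioi (0:ℝ), G t‖ ≤ c^3 * Real.Gamma (m + 3/η) := by
    have hb : Integrable (fun t : ℝ => c^3 * (t ^ (3/η) * (t ^ (m-1) * Real.exp (-t))))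
        (volume.restrict (Set.Ioi 0)) := h3.const_mul _
    have hle : ‖∫ t in Set.Ioi (0:ℝ), G t‖
        ≤ ∫ t in Set.Ioi (0:ℝ), c^3 * (t ^ (3/η) * (t ^ (m-1) * Real.exp (-t))) := by
      refine norm_integral_le_of_norm_le hb ?_
      filter_upwards [ae_restrict_mem measurableSet_Ioi] with t ht
      exact hG_bound t ht
    rwa [integral_const_mul, h3_eq] at hle
  have final_eq :
      (1 / Real.Gamma m) * (∫ t in Set.Ioi (0:ℝ), A t)
          - (1 - c ^ 2 * Real.Gamma (m + 2/η) / (2 * Real.Gamma m))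
        = (1 / Real.Gamma m) * (∫ t in Set.Ioi (0:ℝ), G t) := by
    rw [split]
    field_simp
    ring
  rw [Real.norm_eq_abs, Real.norm_eq_abs]
  calc |(1 / Real.Gamma m) * (∫ t in Set.Ioi (0:ℝ), A t)
          - (1 - c ^ 2 * Real.Gamma (m + 2/η) / (2 * Real.Gamma m))|
      = |(1 / Real.Gamma m)| * |∫ t in Set.Ioi (0:ℝ), G t| := by rw [final_eq, abs_mul]
    _ ≤ (1 / Real.Gamma m) * (c^3 * Real.Gamma (m + 3/η)) := by
        rw [abs_of_nonneg (by positivity : (0:ℝ) ≤ 1 / Real.Gamma m)]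
        exact mul_le_mul_of_nonneg_left hIG (by positivity)
    _ = Real.Gamma (m + 3/η) / Real.Gamma m * |c ^ 3| := by
        rw [abs_of_nonneg (by positivity : (0:ℝ) ≤ c ^ 3)]
        field_simp
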